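/- For every integer g ≥ 1, the following identity holds in ℚ: the sum over all (m₁, m₂) ∈ M_g of w(m₁, m₂) equals the sum over integers i with 0 ≤ i < ⌈(g + 2 − 2k)/6⌉ of 1/((3i + k)! · (g + 2 − (3i + k))!), plus 1/(2 · ((g/2 + 1)!)²) if g is even (and plus 0 if g is odd). Here w(m₁, m₂) := 1/(2 · (m₁!)²) when m₁ = m₂ and w(m₁, m₂) := 1/(m₁! · m₂!) when m₁ ≠ m₂. (This is the combinatorial content of the closed formula for the number of connected components of the moduli space of trigonal superelliptic curves of genus g with level 3 structure: each (m₁, m₂) ∈ M_g contributes |Sp(2g, F₃)| · w(m₁, m₂) components.) -/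

import Mathlib

/-- The index set `M_g`, realized as a finset: pairs `(m₁, m₂)` with `m₁ + m₂ = g + 2`,
`m₁ + 2·m₂ ≡ 0 (mod 3)` and `m₂ ≤ m₁`. -/
def trigIndexFinset (g : ℕ) : Finset (ℕ × ℕ) :=
  (Finset.HasAntidiagonal.antidiagonal (g + 2)).filter (fun p => (p.1 + 2 * p.2) % 3 = 0 ∧ p.2 ≤ p.1)

/-- The reciprocal `w(m₁, m₂)` of the order of the symmetry group `A_{(m₁,m₂)}` of affine
models of trigonal superelliptic curves with branch multiplicity data `(m₁, m₂)`. -/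
def trigWeight (p : ℕ × ℕ) : ℚ :=
  if p.1 = p.2 then 1 / (2 * (p.1.factorial : ℚ) ^ 2)
  else 1 / ((p.1.factorial : ℚ) * (p.2.factorial : ℚ))

theorem stmt4 (g k : ℕ) (hg : 1 ≤ g) (hk : k ≤ 2) (hk3 : (g + 2 + k) % 3 = 0) :
    ∑ p ∈ trigIndexFinset g, trigWeight p =
      (∑ i ∈ Finset.range ((g + 2 - 2 * k + 5) / 6),
        1 / (((3 * i + k).factorial : ℚ) * ((g + 2 - (3 * i + k)).factorial : ℚ))) +
      (if Even g then 1 / (2 * ((g / 2 + 1).factorial : ℚ) ^ 2) else 0) := by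
  set N := (g + 2 - 2 * k + 5) / 6 with hN
  have hmem : ∀ p : ℕ × ℕ, p ∈ trigIndexFinset g ↔
      p.1 + p.2 = g + 2 ∧ p.2 % 3 = k ∧ p.2 ≤ p.1 := by
    intro p
    simp only [trigIndexFinset, Finset.mem_filter, Finset.HasAntidiagonal.mem_antidiagonal]
    omega
  have hsplit : trigIndexFinset g =
      ((Finset.range N).image (fun i => (g + 2 - (3 * i + k), 3 * i + k))) ∪
        (if Even g then ({((g / 2 + 1 : ℕ), (g / 2 + 1 : ℕ))} : Finset (ℕ × ℕ)) else ∅) := by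
    ext p
    rw [hmem]
    by_cases he : Even g
    · have hg2 : g % 2 = 0 := Nat.even_iff.mp he
      simp only [if_pos he, Finset.mem_union, Finset.mem_image, Finset.mem_range,
        Finset.mem_singleton, Prod.ext_iff]
      constructor
      · rintro ⟨h1, h2, h3⟩
        rcases eq_or_lt_of_le h3 with h | h
        · right; omega
        · left; exact ⟨(p.2 - k) / 3, by omega, by omega, by omega⟩
      · rintro (⟨i, hi, h1, h2⟩ | ⟨h1, h2⟩) <;> omega
    · have hg2 : g % 2 = 1 := Nat.odd_iff.mp (Nat.not_even_iff_odd.mp he)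
      simp only [if_neg he, Finset.mem_union, Finset.mem_image, Finset.mem_range,
        Finset.notMem_empty, or_false, Prod.ext_iff]
      constructor
      · rintro ⟨h1, h2, h3⟩
        exact ⟨(p.2 - k) / 3, by omega, by omega, by omega⟩
      · rintro ⟨i, hi, h1, h2⟩; omega
  have hne : ∀ i < N, 3 * i + k < g + 2 - (3 * i + k) := by intro i hi; omega
  have hdisj : Disjoint
      ((Finset.range N).image (fun i => (g + 2 - (3 * i + k), 3 * i + k)))
      (if Even g then ({((g / 2 + 1 : ℕ), (g / 2 + 1 : ℕ))} : Finset (ℕ × ℕ)) else ∅) := by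
    rw [Finset.disjoint_left]
    intro p hp hp'
    simp only [Finset.mem_image, Finset.mem_range] at hp
    obtain ⟨i, hi, rfl⟩ := hp
    by_cases he : Even g
    · simp only [if_pos he, Finset.mem_singleton, Prod.ext_iff] at hp'
      have := hne i hi
      omega
    · simp [if_neg he] at hp'
  rw [hsplit, Finset.sum_union hdisj, Finset.sum_image (by
    intro i hi j hj hij
    simp only [Prod.ext_iff] at hij
    omega)]
  congr 1
  · refine Finset.sum_congr rfl fun i hi => ?_
    rw [Finset.mem_range] at hi
    have := hne i hi
    rw [trigWeight, if_neg (by simpa using this.ne'), mul_comm]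
  · by_cases he : Even g
    · have hg2 : g % 2 = 0 := Nat.even_iff.mp he
      rw [if_pos he, if_pos he, Finset.sum_singleton, trigWeight, if_pos rfl]
    · rw [if_neg he, if_neg he, Finset.sum_empty]
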